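/- Let s ≥ 0, r ≥ 1, F > 0, ν > 0, c ≠ 0, q ∈ ℝ, and let τ₀ > 0, u₀ := q − cτ₀ > 0 satisfy τ₀^{s+1}·u₀^r = 1. Set c_s² := 1/(F·τ₀³), df_* := ((s+1)/r)·(u₀/τ₀), g' := −(s+1)·τ₀^s·u₀^r + c·r·τ₀^{s+1}·u₀^{r−1}, and J := [[0, τ₀²], [g'/(cν), (c_s² − c²)·τ₀²/(cν)]]. Assume c·(df_* − c) > 0. Then all complex eigenvalues of J have strictly positive real part (the equilibrium is a repellor) if and only if c·(c² − c_s²) < 0, and all complex eigenvalues of J have strictly negative real part (the equilibrium is an attractor) if and only if c·(c² − c_s²) > 0. -/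

import Mathlib

open Matrix

lemma quad_root_sign (T D : ℝ) (hD : 0 < D) (μ : ℂ)
    (h : μ ^ 2 - (T : ℂ) * μ + (D : ℂ) = 0) :
    (0 < μ.re ↔ 0 < T) ∧ (μ.re < 0 ↔ T < 0) := by
  rw [Complex.ext_iff] at h
  obtain ⟨h1, h2⟩ := h
  simp [pow_two, Complex.mul_re, Complex.mul_im] at h1 h2
  have hfac : μ.im * (2 * μ.re - T) = 0 := by ring_nf; nlinarith [h2]
  rcases mul_eq_zero.mp hfac with hb | hb
  · rw [hb] at h1
    constructor <;> constructor <;> intro hx <;> nlinarith [h1, hD, hx]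
  · have ha : μ.re = T / 2 := by linarith
    constructor <;> constructor <;> intro hx <;> rw [ha] at * <;> linarith

theorem stmt18 (s r F ν c q τ₀ u₀ : ℝ) (hs : 0 ≤ s) (hr : 1 ≤ r)
    (hF : 0 < F) (hν : 0 < ν) (hc : c ≠ 0)
    (hτ₀ : 0 < τ₀) (hu₀def : u₀ = q - c * τ₀) (hu₀ : 0 < u₀)
    (heq : τ₀ ^ (s + 1) * u₀ ^ r = 1)
    (cs2 df g' : ℝ)
    (hcs2 : cs2 = 1 / (F * τ₀ ^ 3))
    (hdf : df = ((s + 1) / r) * (u₀ / τ₀))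
    (hg' : g' = -(s + 1) * τ₀ ^ s * u₀ ^ r + c * r * τ₀ ^ (s + 1) * u₀ ^ (r - 1))
    (J : Matrix (Fin 2) (Fin 2) ℝ)
    (hJ : J = !![0, τ₀ ^ 2; g' / (c * ν), (cs2 - c ^ 2) * τ₀ ^ 2 / (c * ν)])
    (hnonsaddle : c * (df - c) > 0) :
    ((∀ μ : ℂ,
        (J.map (Complex.ofReal) - μ • (1 : Matrix (Fin 2) (Fin 2) ℂ)).det = 0 →
          0 < μ.re)
      ↔ c * (c ^ 2 - cs2) < 0)
    ∧ ((∀ μ : ℂ,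
        (J.map (Complex.ofReal) - μ • (1 : Matrix (Fin 2) (Fin 2) ℂ)).det = 0 →
          μ.re < 0)
      ↔ c * (c ^ 2 - cs2) > 0) := by
  have hr0 : (0:ℝ) < r := lt_of_lt_of_le one_pos hr
  have hc2 : (0:ℝ) < c ^ 2 := pow_two_pos_of_ne_zero hc
  set T : ℝ := (cs2 - c ^ 2) * τ₀ ^ 2 / (c * ν) with hTdef
  set Dd : ℝ := -(τ₀ ^ 2 * (g' / (c * ν))) with hDdef
  -- determinant formula
  have hdet : ∀ μ : ℂ,
      (J.map (Complex.ofReal) - μ • (1 : Matrix (Fin 2) (Fin 2) ℂ)).det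
        = μ ^ 2 - (T : ℂ) * μ + (Dd : ℂ) := by
    intro μ
    simp [hJ, Matrix.det_fin_two, Matrix.map_apply, Matrix.one_apply, hTdef, hDdef]
    push_cast
    ring
  -- factor g'
  have hP : 0 < τ₀ ^ (s + 1) * u₀ ^ (r - 1) :=
    mul_pos (Real.rpow_pos_of_pos hτ₀ _) (Real.rpow_pos_of_pos hu₀ _)
  have hgfac : g' = τ₀ ^ (s + 1) * u₀ ^ (r - 1) * (r * (c - df)) := by
    rw [hg', hdf, Real.rpow_add_one hτ₀.ne', Real.rpow_sub_one hu₀.ne']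
    field_simp
    ring
  have key : 0 < (τ₀ ^ (s + 1) * u₀ ^ (r - 1)) * r * (c * (df - c)) :=
    mul_pos (mul_pos hP hr0) hnonsaddle
  have hgc : g' * c < 0 := by rw [hgfac]; nlinarith [key]
  have hD : 0 < Dd := by
    have hform : Dd = (-(g' * c)) * (τ₀ ^ 2 / (c ^ 2 * ν)) := by
      rw [hDdef]; field_simp
    rw [hform]
    exact mul_pos (by linarith) (div_pos (by positivity) (mul_pos hc2 hν))
  -- sign of trace
  have hk : 0 < τ₀ ^ 2 / (c ^ 2 * ν) := div_pos (by positivity) (mul_pos hc2 hν)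
  have hTform : T = -(c * (c ^ 2 - cs2)) * (τ₀ ^ 2 / (c ^ 2 * ν)) := by
    rw [hTdef]; field_simp; ring
  have hT1 : 0 < T ↔ c * (c ^ 2 - cs2) < 0 := by
    rw [hTform, mul_pos_iff_of_pos_right hk, neg_pos]
  have hT2 : T < 0 ↔ c * (c ^ 2 - cs2) > 0 := by
    rw [hTform, neg_mul, neg_lt_zero, mul_pos_iff_of_pos_right hk]
  -- an explicit root
  obtain ⟨z, hz⟩ := IsAlgClosed.exists_pow_nat_eq ((T : ℂ) ^ 2 - 4 * (Dd : ℂ)) (n := 2) (by norm_num)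
  set μ₀ : ℂ := ((T : ℂ) + z) / 2 with hμ₀
  have hroot : μ₀ ^ 2 - (T : ℂ) * μ₀ + (Dd : ℂ) = 0 := by
    rw [hμ₀]; linear_combination hz / 4
  constructor
  · constructor
    · intro hall
      exact hT1.mp ((quad_root_sign T Dd hD μ₀ hroot).1.mp
        (hall μ₀ (by rw [hdet]; exact hroot)))
    · intro hlt μ hμ
      rw [hdet] at hμ
      exact (quad_root_sign T Dd hD μ hμ).1.mpr (hT1.mpr hlt)
  · constructor
    · intro hall
      exact hT2.mp ((quad_root_sign T Dd hD μ₀ hroot).2.mp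
        (hall μ₀ (by rw [hdet]; exact hroot)))
    · intro hlt μ hμ
      rw [hdet] at hμ
      exact (quad_root_sign T Dd hD μ hμ).2.mpr (hT2.mpr hlt)
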